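/- Every column vector u ∈ ℤ^n that is the first column of a matrix in Γ_n[2] (i.e., u is unimodular, u_1 is odd, and u_i is even for i ≥ 2) can be reduced to ±e_1 by a sequence of even row operations (adding an even multiple of one entry to another). -/

import Mathlib

/-- The principal level 2 congruence subgroup of `GL(n, ℤ)`. -/
def congruence2 (n : ℕ) : Subgroup (GL (Fin n) ℤ) :=
  (Matrix.GeneralLinearGroup.map (Int.castRingHom (ZMod 2))).ker

/-- One even row operation on a vector: add an even multiple of the `j`th entry
to the `i`th entry (`i ≠ j`). -/
def EvenRowOpStep {n : ℕ} (u v : Fin n → ℤ) : Prop :=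
  ∃ (i j : Fin n) (k : ℤ), i ≠ j ∧
    v = Function.update u i (u i + 2 * k * u j)

private lemma parity_natAbs_ne {a b : ℤ} (ha : Odd a) (hb : Even b) :
    a.natAbs ≠ b.natAbs := by
  intro h
  rcases Int.natAbs_eq_natAbs_iff.mp h with h | h
  · rw [h] at ha
    exact (Int.not_odd_iff_even.mpr hb) ha
  · rw [h] at ha
    exact (Int.not_odd_iff_even.mpr hb.neg) ha

private lemma balanced_div_pos (a d : ℤ) (hd : 0 < d) :
    ∃ q : ℤ, (a - 2 * d * q).natAbs ≤ d.natAbs := by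
  have key := Int.mul_ediv_add_emod a (2 * d)
  have h0 := Int.emod_nonneg a (by omega : (2 * d) ≠ 0)
  have h1 := Int.emod_lt_of_pos a (by omega : (0 : ℤ) < 2 * d)
  by_cases hr : a % (2 * d) ≤ d
  · refine ⟨a / (2 * d), ?_⟩
    have e : a - 2 * d * (a / (2 * d)) = a % (2 * d) := by linarith
    rw [e]; omega
  · refine ⟨a / (2 * d) + 1, ?_⟩
    have e : a - 2 * d * (a / (2 * d) + 1) = a % (2 * d) - 2 * d := by
      rw [mul_add]; linarith
    rw [e]; omega

private lemma balanced_div (a d : ℤ) (hd : d ≠ 0) :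
    ∃ q : ℤ, (a - 2 * d * q).natAbs ≤ d.natAbs := by
  rcases hd.lt_or_gt with h | h
  · obtain ⟨q, hq⟩ := balanced_div_pos a (-d) (by omega)
    refine ⟨-q, ?_⟩
    have e : a - 2 * d * (-q) = a - 2 * (-d) * q := by ring
    rw [e]
    simpa using hq
  · exact balanced_div_pos a d h

private lemma combo_step {n : ℕ} (u c : Fin n → ℤ) (i j : Fin n) (hij : i ≠ j) (k : ℤ)
    (hc : ∑ t, c t * u t = 1) :
    ∑ t, Function.update c j (c j - 2 * k * c i) t *
      Function.update u i (u i + 2 * k * u j) t = 1 := by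
  have h : ∀ t, Function.update c j (c j - 2 * k * c i) t *
      Function.update u i (u i + 2 * k * u j) t
      = c t * u t + (if t = i then 2 * k * c i * u j else 0)
        + (if t = j then -(2 * k * c i * u j) else 0) := by
    intro t
    rcases eq_or_ne t i with rfl | hti
    · simp [Function.update_of_ne hij, hij]
      ring
    · rcases eq_or_ne t j with rfl | htj
      · simp [Function.update_of_ne (Ne.symm hij), hti]
        ring
      · simp [Function.update_of_ne hti, Function.update_of_ne htj, hti, htj]
  simp only [h, Finset.sum_add_distrib, hc, Finset.sum_ite_eq' Finset.univ,
    Finset.mem_univ, if_true]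
  ring

private lemma sum_natAbs_update_lt {n : ℕ} (u : Fin n → ℤ) (i : Fin n) (r : ℤ)
    (h : r.natAbs < (u i).natAbs) :
    ∑ t, ((Function.update u i r) t).natAbs < ∑ t, (u t).natAbs := by
  have h1 : (fun t => ((Function.update u i r) t).natAbs)
      = Function.update (fun t => (u t).natAbs) i r.natAbs := by
    funext t
    rcases eq_or_ne t i with rfl | ht
    · simp
    · simp [Function.update_of_ne ht]
  rw [show ∑ t, ((Function.update u i r) t).natAbs
      = ∑ t, Function.update (fun t => (u t).natAbs) i r.natAbs t from by rw [h1],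
    Finset.sum_update_of_mem (Finset.mem_univ i)]
  have h2 : (u i).natAbs + ∑ x ∈ Finset.univ \ {i}, (u x).natAbs
      = ∑ t, (u t).natAbs := by
    rw [← Finset.erase_eq Finset.univ i]
    exact Finset.add_sum_erase _ (fun t => (u t).natAbs) (Finset.mem_univ i)
  omega

private lemma reduce_aux {n : ℕ} [NeZero n] :
    ∀ N : ℕ, ∀ u : Fin n → ℤ, (∑ t, (u t).natAbs) ≤ N →
    (∃ c : Fin n → ℤ, ∑ t, c t * u t = 1) → Odd (u 0) →
    (∀ i : Fin n, i ≠ 0 → Even (u i)) →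
    ∃ ε : ℤ, (ε = 1 ∨ ε = -1) ∧
      Relation.ReflTransGen EvenRowOpStep u (ε • Pi.single (0 : Fin n) 1) := by
  intro N
  induction N with
  | zero =>
    intro u hsum hc hodd _
    exfalso
    have h0 : (u 0).natAbs ≤ 0 :=
      le_trans (Finset.single_le_sum (f := fun t => (u t).natAbs)
        (fun t _ => Nat.zero_le _) (Finset.mem_univ 0)) hsum
    have : u 0 = 0 := by omega
    rw [this] at hodd
    exact (Int.not_odd_iff_even.mpr Even.zero) hodd
  | succ N ih =>
    intro u hsum ⟨c, hc⟩ hodd heven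
    by_cases hall : ∀ i : Fin n, i ≠ 0 → u i = 0
    · -- all other entries vanish; u 0 is a unit
      have hsum1 : ∑ t, c t * u t = c 0 * u 0 :=
        Finset.sum_eq_single_of_mem 0 (Finset.mem_univ 0)
          (fun t _ ht => by rw [hall t ht, mul_zero])
      rw [hsum1] at hc
      have hunit : IsUnit (u 0) := IsUnit.of_mul_eq_one _ (by rw [mul_comm]; exact hc)
      have hε := Int.isUnit_iff.mp hunit
      refine ⟨u 0, hε, ?_⟩
      have : u = u 0 • Pi.single (0 : Fin n) 1 := by
        funext t
        rcases eq_or_ne t 0 with rfl | ht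
        · simp
        · simp [Pi.single_eq_of_ne ht, hall t ht]
      rw [← this]
    · push_neg at hall
      obtain ⟨i, hi0, hiu⟩ := hall
      have hu0 : u 0 ≠ 0 := by
        intro h; rw [h] at hodd; exact (Int.not_odd_iff_even.mpr Even.zero) hodd
      by_cases hle : (u 0).natAbs ≤ (u i).natAbs
      · -- reduce entry i using pivot 0
        obtain ⟨q, hq⟩ := balanced_div (u i) (u 0) hu0
        set r : ℤ := u i + 2 * (-q) * u 0 with hrdef
        have hr' : r = u i - 2 * u 0 * q := by rw [hrdef]; ring
        have hev : Even r := by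
          obtain ⟨m, hm⟩ := heven i hi0
          exact ⟨m + (-q) * u 0, by rw [hrdef, hm]; ring⟩
        have hne := parity_natAbs_ne hodd hev
        have hlt : r.natAbs < (u i).natAbs := by
          have h1 : r.natAbs ≤ (u 0).natAbs := by rw [hr']; exact hq
          omega
        set v := Function.update u i r with hv
        have hstep : EvenRowOpStep u v := ⟨i, 0, -q, hi0, rfl⟩
        have hvsum : ∑ t, (v t).natAbs ≤ N := by
          have h2 : ∑ t, (v t).natAbs < ∑ t, (u t).natAbs := by
            rw [hv]; exact sum_natAbs_update_lt u i r hlt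
          omega
        have hvodd : Odd (v 0) := by
          rw [hv, Function.update_of_ne (Ne.symm hi0)]; exact hodd
        have hveven : ∀ t : Fin n, t ≠ 0 → Even (v t) := by
          intro t ht
          rcases eq_or_ne t i with rfl | hti
          · rw [hv, Function.update_self]; exact hev
          · rw [hv, Function.update_of_ne hti]; exact heven t ht
        obtain ⟨ε, hε, hrel⟩ := ih v hvsum ⟨_, combo_step u c i 0 hi0 (-q) hc⟩ hvodd hveven
        exact ⟨ε, hε, Relation.ReflTransGen.head hstep hrel⟩
      · -- reduce entry 0 using pivot i
        obtain ⟨q, hq⟩ := balanced_div (u 0) (u i) hiu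
        set r : ℤ := u 0 + 2 * (-q) * u i with hrdef
        have hr' : r = u 0 - 2 * u i * q := by rw [hrdef]; ring
        have hodd' : Odd r := by
          obtain ⟨m, hm⟩ := hodd
          obtain ⟨l, hl⟩ := heven i hi0
          exact ⟨m + (-q) * (l + l), by rw [hrdef, hm, hl]; ring⟩
        have hne := parity_natAbs_ne hodd' (heven i hi0)
        have hlt : r.natAbs < (u 0).natAbs := by
          have h1 : r.natAbs ≤ (u i).natAbs := by rw [hr']; exact hq
          omega
        set v := Function.update u 0 r with hv
        have hstep : EvenRowOpStep u v := ⟨0, i, -q, Ne.symm hi0, rfl⟩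
        have hvsum : ∑ t, (v t).natAbs ≤ N := by
          have h2 : ∑ t, (v t).natAbs < ∑ t, (u t).natAbs := by
            rw [hv]; exact sum_natAbs_update_lt u 0 r hlt
          omega
        have hvodd : Odd (v 0) := by
          rw [hv, Function.update_self]; exact hodd'
        have hveven : ∀ t : Fin n, t ≠ 0 → Even (v t) := by
          intro t ht
          rw [hv, Function.update_of_ne ht]; exact heven t ht
        obtain ⟨ε, hε, hrel⟩ := ih v hvsum
          ⟨_, combo_step u c 0 i (Ne.symm hi0) (-q) hc⟩ hvodd hveven
        exact ⟨ε, hε, Relation.ReflTransGen.head hstep hrel⟩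

/-- Any column vector that is the first column of a matrix in `Γ_n[2]` can be
reduced to `±e_1` by a sequence of even row operations. -/
theorem first_column_reduces_to_e1 {n : ℕ} [NeZero n] (u : Fin n → ℤ)
    (hu : ∃ g ∈ congruence2 n,
      ∀ i : Fin n, (g : Matrix (Fin n) (Fin n) ℤ) i 0 = u i) :
    ∃ ε : ℤ, (ε = 1 ∨ ε = -1) ∧
      Relation.ReflTransGen EvenRowOpStep u (ε • Pi.single (0 : Fin n) 1) := by
  obtain ⟨g, hg, hgu⟩ := hu
  -- unimodularity: a Bezout combination giving 1
  have hmul : (↑(g⁻¹) : Matrix (Fin n) (Fin n) ℤ) * (↑g : Matrix (Fin n) (Fin n) ℤ) = 1 :=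
    Units.inv_mul g
  have hcombo : ∑ j, (↑(g⁻¹) : Matrix (Fin n) (Fin n) ℤ) 0 j * u j = 1 := by
    have h00 := congrFun (congrFun hmul 0) 0
    rw [Matrix.mul_apply] at h00
    rw [show ((1 : Matrix (Fin n) (Fin n) ℤ) 0 0) = 1 from Matrix.one_apply_eq 0] at h00
    rw [← h00]
    exact Finset.sum_congr rfl (fun j _ => by rw [hgu j])
  -- parity from level 2 congruence
  have hker : Matrix.GeneralLinearGroup.map (Int.castRingHom (ZMod 2)) g = 1 := hg
  have hcast : ∀ i : Fin n, ((u i : ZMod 2)) = if i = 0 then 1 else 0 := by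
    intro i
    have h1 : ((Matrix.GeneralLinearGroup.map (Int.castRingHom (ZMod 2)) g :
        GL (Fin n) (ZMod 2)) : Matrix (Fin n) (Fin n) (ZMod 2))
        = (1 : Matrix (Fin n) (Fin n) (ZMod 2)) := by
      rw [hker]; exact Units.val_one
    have h2 : (Int.castRingHom (ZMod 2)) (u i)
        = (1 : Matrix (Fin n) (Fin n) (ZMod 2)) i 0 := by
      rw [← hgu i]
      exact congrFun (congrFun h1 i) 0
    simpa [Matrix.one_apply] using h2
  have hodd : Odd (u 0) := by
    have h := hcast 0
    rw [if_pos rfl] at h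
    have : ((u 0 - 1 : ℤ) : ZMod 2) = 0 := by push_cast; rw [h]; ring
    obtain ⟨k, hk⟩ := (ZMod.intCast_zmod_eq_zero_iff_dvd _ 2).mp this
    exact ⟨k, by omega⟩
  have heven : ∀ i : Fin n, i ≠ 0 → Even (u i) := by
    intro i hi
    have h := hcast i
    rw [if_neg hi] at h
    obtain ⟨k, hk⟩ := (ZMod.intCast_zmod_eq_zero_iff_dvd _ 2).mp h
    exact ⟨k, by omega⟩
  exact reduce_aux (∑ t, (u t).natAbs) u le_rfl ⟨_, hcombo⟩ hodd heven
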